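/- Let B, C, E, G, M, N : (0,∞) → ℝ with E, G, M, N differentiable, satisfying E′ = MC − EG, M′ = E² + MG − BM − EN, G′ = GB + NC − CE − G², N′ = GE − CM on (0,∞), where F′ denotes x·(dF/dx). Then the three functions E + N, E² + N² + 2MG, and EN − GM are constant on (0,∞). In particular the characteristic polynomial, and hence the eigenvalues, of the matrix C₂ = [[E,M],[G,N]] are invariant. -/

import Mathlib

lemma const_on_Ioi (f : ℝ → ℝ)
    (hf : ∀ x, 0 < x → DifferentiableAt ℝ f x)
    (hf' : ∀ x, 0 < x → deriv f x = 0) :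
    ∀ x, 0 < x → ∀ y, 0 < y → f x = f y := by
  intro x hx y hy
  have hopen : IsOpen (Set.Ioi (0:ℝ)) := isOpen_Ioi
  refine (convex_Ioi (0:ℝ)).is_const_of_fderivWithin_eq_zero
    (fun z hz => (hf z hz).differentiableWithinAt) (fun z hz => ?_) hx hy
  rw [fderivWithin_of_isOpen hopen hz, ← toSpanSingleton_deriv, hf' z hz]
  ext
  simp

/-- For the central system (49) of the two-dimensional algebra,
`E′ = MC − EG, M′ = E² + MG − BM − EN, G′ = GB + NC − CE − G², N′ = GE − CM`
(with `F′ = x·dF/dx` on `(0,∞)`), the quantities `E + N`, `E² + N² + 2MG`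
and `EN − GM` are constant; in particular the characteristic polynomial of
`C₂ = [[E,M],[G,N]]` is invariant. -/
theorem stmt_6 (B C E G M N : ℝ → ℝ)
    (hE : ∀ x, 0 < x → DifferentiableAt ℝ E x)
    (hG : ∀ x, 0 < x → DifferentiableAt ℝ G x)
    (hM : ∀ x, 0 < x → DifferentiableAt ℝ M x)
    (hN : ∀ x, 0 < x → DifferentiableAt ℝ N x)
    (hsys : ∀ x, 0 < x →
      x * deriv E x = M x * C x - E x * G x ∧
      x * deriv M x = E x ^ 2 + M x * G x - B x * M x - E x * N x ∧
      x * deriv G x = G x * B x + N x * C x - C x * E x - G x ^ 2 ∧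
      x * deriv N x = G x * E x - C x * M x) :
    ∀ x, 0 < x → ∀ y, 0 < y →
      E x + N x = E y + N y ∧
      E x ^ 2 + N x ^ 2 + 2 * M x * G x = E y ^ 2 + N y ^ 2 + 2 * M y * G y ∧
      E x * N x - G x * M x = E y * N y - G y * M y ∧
      (!![E x, M x; G x, N x]).charpoly = (!![E y, M y; G y, N y]).charpoly := by
  -- derivatives from the system
  have hE' : ∀ x, 0 < x → deriv E x = (M x * C x - E x * G x) / x := by
    intro x hx; field_simp [hx.ne'] ; linarith [(hsys x hx).1]
  have hM' : ∀ x, 0 < x → deriv M x = (E x ^ 2 + M x * G x - B x * M x - E x * N x) / x := by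
    intro x hx; field_simp [hx.ne'] ; linarith [(hsys x hx).2.1]
  have hG' : ∀ x, 0 < x → deriv G x = (G x * B x + N x * C x - C x * E x - G x ^ 2) / x := by
    intro x hx; field_simp [hx.ne'] ; linarith [(hsys x hx).2.2.1]
  have hN' : ∀ x, 0 < x → deriv N x = (G x * E x - C x * M x) / x := by
    intro x hx; field_simp [hx.ne'] ; linarith [(hsys x hx).2.2.2]
  have h1 : ∀ x, 0 < x → ∀ y, 0 < y → E x + N x = E y + N y := by
    refine const_on_Ioi _ (fun x hx => (hE x hx).add (hN x hx)) (fun x hx => ?_)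
    rw [deriv_fun_add (hE x hx) (hN x hx), hE' x hx, hN' x hx]
    field_simp; ring
  have h2 : ∀ x, 0 < x → ∀ y, 0 < y →
      E x ^ 2 + N x ^ 2 + 2 * M x * G x = E y ^ 2 + N y ^ 2 + 2 * M y * G y := by
    refine const_on_Ioi (fun x => E x ^ 2 + N x ^ 2 + 2 * M x * G x)
      (fun x hx => (((hE x hx).pow 2).add ((hN x hx).pow 2)).add
        (((differentiableAt_const 2).mul (hM x hx)).mul (hG x hx))) (fun x hx => ?_)
    have : deriv (fun x => E x ^ 2 + N x ^ 2 + 2 * M x * G x) x =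
        2 * E x * deriv E x + 2 * N x * deriv N x +
          (2 * deriv M x * G x + 2 * M x * deriv G x) := by
      rw [deriv_fun_add (((hE x hx).fun_pow 2).fun_add ((hN x hx).fun_pow 2))
          (((differentiableAt_const 2).fun_mul (hM x hx)).fun_mul (hG x hx)),
        deriv_fun_add ((hE x hx).fun_pow 2) ((hN x hx).fun_pow 2),
        deriv_fun_pow (hE x hx) 2, deriv_fun_pow (hN x hx) 2,
        deriv_fun_mul ((differentiableAt_const 2).fun_mul (hM x hx)) (hG x hx),
        deriv_fun_mul (differentiableAt_const 2) (hM x hx)]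
      simp only [deriv_const', zero_mul, zero_add]
      ring
    rw [this, hE' x hx, hN' x hx, hM' x hx, hG' x hx]
    field_simp; ring
  have h3 : ∀ x, 0 < x → ∀ y, 0 < y →
      E x * N x - G x * M x = E y * N y - G y * M y := by
    refine const_on_Ioi (fun x => E x * N x - G x * M x)
      (fun x hx => ((hE x hx).mul (hN x hx)).sub ((hG x hx).mul (hM x hx)))
      (fun x hx => ?_)
    rw [deriv_fun_sub ((hE x hx).fun_mul (hN x hx)) ((hG x hx).fun_mul (hM x hx)),
      deriv_fun_mul (hE x hx) (hN x hx), deriv_fun_mul (hG x hx) (hM x hx),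
      hE' x hx, hN' x hx, hM' x hx, hG' x hx]
    field_simp; ring
  intro x hx y hy
  refine ⟨h1 x hx y hy, h2 x hx y hy, h3 x hx y hy, ?_⟩
  have key : ∀ a b c d : ℝ, (!![a, b; c, d]).charpoly =
      Polynomial.X ^ 2 - Polynomial.C (a + d) * Polynomial.X + Polynomial.C (a * d - b * c) := by
    intro a b c d
    rw [Matrix.charpoly, Matrix.det_fin_two]
    simp [Matrix.charmatrix_apply, Matrix.one_apply]
    ring
  rw [key, key, h1 x hx y hy, show E x * N x - M x * G x = E y * N y - M y * G y by
    have := h3 x hx y hy; linarith]
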